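/- Let S and S′ be locally compact second countable groups, let λ′ be a left Haar measure on S′, and let θ : S → S′ be a continuous homomorphism. Let G be a Polish group, let ρ : S → G and ρ′ : S′ → G be continuous homomorphisms, and let φ : S′ → G be a Borel measurable map such that for every s ∈ S and every t ∈ S′, for λ′-almost every x ∈ S′ one has φ(θ(s)·x·t) = ρ(s)·φ(x)·ρ′(t). Then there exists g ∈ G such that ρ(s) = g·ρ′(θ(s))·g⁻¹ for every s ∈ S. -/

import Mathlib

open MeasureTheory

/-- Let `θ : S → S'` be a continuous homomorphism of lcsc groups, `λ'` a left Haar measure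
on `S'`, `G` a Polish group, `ρ : S → G` and `ρ' : S' → G` continuous homomorphisms, and
`φ : S' → G` a Borel map such that for all `s ∈ S`, `t ∈ S'`, for `λ'`-a.e. `x ∈ S'` one has
`φ(θ(s)·x·t) = ρ(s)·φ(x)·ρ'(t)`. Then `ρ = inn(g) ∘ ρ' ∘ θ` for some `g ∈ G`. -/
theorem extension_of_equivariant_map
    (S : Type*) [Group S] [TopologicalSpace S] [IsTopologicalGroup S]
    [LocallyCompactSpace S] [SecondCountableTopology S]
    (S' : Type*) [Group S'] [TopologicalSpace S'] [IsTopologicalGroup S']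
    [LocallyCompactSpace S'] [SecondCountableTopology S']
    [MeasurableSpace S'] [BorelSpace S']
    (lam' : Measure S') [lam'.IsHaarMeasure]
    (θ : S →* S') (hθ : Continuous θ)
    (G : Type*) [Group G] [TopologicalSpace G] [IsTopologicalGroup G] [PolishSpace G]
    [MeasurableSpace G] [BorelSpace G]
    (ρ : S →* G) (hρ : Continuous ρ)
    (ρ' : S' →* G) (hρ' : Continuous ρ')
    (φ : S' → G) (hφmeas : Measurable φ)
    (hφ : ∀ s : S, ∀ t : S', ∀ᵐ x ∂lam', φ (θ s * x * t) = ρ s * φ x * ρ' t) :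
    ∃ g : G, ∀ s : S, ρ s = g * ρ' (θ s) * g⁻¹ := by
  haveI : SigmaFinite lam' := inferInstance
  have hρ'm : Measurable ρ' := hρ'.measurable
  have hne : lam' ≠ 0 := by
    intro h
    have := isOpen_univ.measure_pos lam' ⟨(1 : S'), trivial⟩
    rw [h] at this
    simp at this
  haveI : (ae lam').NeBot := ae_neBot.2 hne
  -- Step 1: the cocycle identity holds for a.e. pair (t, x)
  have hA : MeasurableSet {p : S' × S' | ¬ φ (p.2 * p.1) = φ p.2 * ρ' p.1} := by
    have hf : StronglyMeasurable fun p : S' × S' => φ (p.2 * p.1) :=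
      Measurable.stronglyMeasurable
        (show Measurable fun p : S' × S' => φ (p.2 * p.1) from
          hφmeas.comp (measurable_snd.mul measurable_fst))
    have hg : StronglyMeasurable fun p : S' × S' => φ p.2 * ρ' p.1 :=
      Measurable.stronglyMeasurable
        ((hφmeas.comp measurable_snd).mul (hρ'm.comp measurable_fst))
    exact (hf.measurableSet_eq_fun hg).compl
  have h1 : ∀ᵐ p ∂(lam'.prod lam'), φ (p.2 * p.1) = φ p.2 * ρ' p.1 := by
    rw [ae_iff, Measure.measure_prod_null hA]
    refine Filter.Eventually.of_forall fun t => ?_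
    have ht := hφ 1 t
    simp only [map_one, one_mul] at ht
    exact ae_iff.mp ht
  -- Step 2: transport by the measure-preserving map (x, y) ↦ (x⁻¹ * y, x)
  have hF : MeasurePreserving (fun z : S' × S' => ((z.1)⁻¹ * z.2, z.1))
      (lam'.prod lam') (lam'.prod lam') := by
    have h₁ := measurePreserving_prod_inv_mul (G := S') lam' lam'
    have h₂ := Measure.measurePreserving_swap (μ := lam') (ν := lam')
    exact h₂.comp h₁
  have h2 : ∀ᵐ z ∂(lam'.prod lam'),
      φ z.2 * (ρ' z.2)⁻¹ = φ z.1 * (ρ' z.1)⁻¹ := by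
    have := hF.quasiMeasurePreserving.ae h1
    refine this.mono fun z hz => ?_
    simp only [mul_inv_cancel_left] at hz
    rw [hz, map_mul, map_inv]
    group
  -- Step 3: φ agrees a.e. with a constant times ρ'
  have h3 : ∀ᵐ x ∂lam', ∀ᵐ y ∂lam', φ y * (ρ' y)⁻¹ = φ x * (ρ' x)⁻¹ :=
    Measure.ae_ae_of_ae_prod h2
  obtain ⟨x₀, hx₀⟩ := h3.exists
  obtain ⟨c, hc'⟩ : ∃ c : G, ∀ᵐ y ∂lam', φ y = c * ρ' y :=
    ⟨φ x₀ * (ρ' x₀)⁻¹, hx₀.mono fun y hy => by rw [← hy, inv_mul_cancel_right]⟩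
  refine ⟨c, fun s => ?_⟩
  -- For a.e. x: φ(θ s * x) = ρ s * φ x, φ x = c * ρ' x, φ(θ s * x) = c * ρ'(θ s * x)
  have e1 : ∀ᵐ x ∂lam', φ (θ s * x) = ρ s * φ x := by
    have := hφ s 1
    simpa using this
  have e2 : ∀ᵐ x ∂lam', φ (θ s * x) = c * ρ' (θ s * x) :=
    (measurePreserving_mul_left lam' (θ s)).quasiMeasurePreserving.ae hc'
  obtain ⟨x, hx1, hx2, hx3⟩ := (e1.and (e2.and hc')).exists
  have key : ρ s * c * ρ' x = c * ρ' (θ s) * ρ' x := by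
    rw [mul_assoc (ρ s), ← hx3, ← hx1, hx2, map_mul, mul_assoc]
  have hmain : ρ s * c = c * ρ' (θ s) := mul_right_cancel key
  exact (eq_mul_inv_iff_mul_eq).mpr hmain
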